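/- If L ≥ 2 is even, then the minimum cardinality of a 1-cycle S of the L×L Klein-bottle lattice whose intersection with the seam has odd cardinality is exactly L+1; in particular every homologically nontrivial cycle in the seam-crossing class has at least L+1 edges (one more than the corresponding shortest cycle of length L on the L×L toric lattice), and this bound is attained. -/

import Mathlib

/-- The second endpoint of the horizontal edge based at `p` in the `L × L` Klein-bottle
lattice: identifying `ZMod L` with `{0, …, L-1}`, we have `φ(x, y) = (x+1, y)` if
`x ≠ L-1` (i.e. `x ≠ -1` in `ZMod L`) and `φ(L-1, y) = (0, L-1-y)` (the
orientation-reversing identification of the Klein bottle, with `L-1-y = -1-y` in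
`ZMod L`). -/
def kleinPhi (L : ℕ) (p : ZMod L × ZMod L) : ZMod L × ZMod L :=
  if p.1 = -1 then (0, -1 - p.2) else (p.1 + 1, p.2)

/-- The endpoints of an edge of the Klein-bottle lattice: the horizontal edge `(p, 0)`
has endpoints `p` and `kleinPhi L p`; the vertical edge `(p, 1)` has endpoints `p` and
`p + (0, 1)`. -/
def kleinEnds (L : ℕ) (e : (ZMod L × ZMod L) × Fin 2) : Set (ZMod L × ZMod L) :=
  if e.2 = 0 then {e.1, kleinPhi L e.1} else {e.1, e.1 + (0, 1)}

/-- `S` is a 1-cycle of the Klein-bottle lattice: every vertex is an endpoint of an even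
number of edges of `S`. -/
def kleinIsCycle (L : ℕ) (S : Set ((ZMod L × ZMod L) × Fin 2)) : Prop :=
  ∀ v : ZMod L × ZMod L, Even {e | e ∈ S ∧ v ∈ kleinEnds L e}.ncard

/-- The seam of the Klein-bottle lattice: the `L` horizontal edges `h(L-1, y)`,
`y ∈ ZMod L` (with `L-1 = -1` in `ZMod L`). -/
def kleinSeam (L : ℕ) : Set ((ZMod L × ZMod L) × Fin 2) :=
  {e | ∃ y : ZMod L, e = ((-1, y), 0)}

open scoped Classical

lemma kleinPhi_fst (L : ℕ) (p : ZMod L × ZMod L) : (kleinPhi L p).1 = p.1 + 1 := by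
  unfold kleinPhi; split
  · rename_i h; simp [h]
  · rfl

lemma mem_ends_iff (L : ℕ) (v : ZMod L × ZMod L) (e : (ZMod L × ZMod L) × Fin 2) :
    v ∈ kleinEnds L e ↔
      (e.2 = 0 ∧ (v = e.1 ∨ v = kleinPhi L e.1)) ∨
      (e.2 = 1 ∧ (v = e.1 ∨ v = e.1 + (0, 1))) := by
  rcases e with ⟨p, i⟩
  fin_cases i <;> simp [kleinEnds]

lemma fiber_card (L : ℕ) (hL : 2 ≤ L) [NeZero L] (x : ZMod L) (e : (ZMod L × ZMod L) × Fin 2) :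
    (Finset.univ.filter (fun y : ZMod L => (x, y) ∈ kleinEnds L e)).card =
      ((if e.2 = 0 ∧ e.1.1 = x then 1 else 0) + (if e.2 = 0 ∧ e.1.1 = x - 1 then 1 else 0))
      + (if e.2 = 1 ∧ e.1.1 = x then 2 else 0) := by
  haveI : Fact (1 < L) := ⟨hL⟩
  have h10 : (1 : ZMod L) ≠ 0 := one_ne_zero
  rcases e with ⟨⟨a, b⟩, i⟩
  have hi : i = 0 ∨ i = 1 := by
    rcases i with ⟨_ | _ | _, h⟩
    · exact Or.inl rfl
    · exact Or.inr rfl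
    · omega
  have hphi : kleinPhi L (a, b) = (a + 1, if a = -1 then -1 - b else b) := by
    unfold kleinPhi
    split <;> rename_i h <;> simp_all
  rcases hi with rfl | rfl
  · by_cases hax : a = x
    · subst hax
      have hne : a ≠ a - 1 := fun h => h10 (by linear_combination h)
      have : Finset.univ.filter (fun y : ZMod L => (a, y) ∈ kleinEnds L ((a, b), 0)) = {b} := by
        ext y
        have hne2 : a ≠ a + 1 := fun h => h10 (by linear_combination -h)
        simp [mem_ends_iff, hphi, Prod.ext_iff, hne2]
      simp [this, hne]
    · by_cases hax' : a = x - 1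
      · subst hax'
        have hxx : x = x - 1 + 1 := by ring
        have : Finset.univ.filter (fun y : ZMod L => (x, y) ∈ kleinEnds L ((x - 1, b), 0)) =
            {if x - 1 = -1 then -1 - b else b} := by
          ext y
          have hne2 : x ≠ x - 1 := fun h => h10 (by linear_combination h)
          simp [mem_ends_iff, hphi, Prod.ext_iff, hne2, ← hxx]
        simp [this, hax]
      · have : Finset.univ.filter (fun y : ZMod L => (x, y) ∈ kleinEnds L ((a, b), 0)) = ∅ := by
          ext y
          have h1 : x ≠ a := fun h => hax h.symm
          have h2 : x ≠ a + 1 := fun h => hax' (by linear_combination -h)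
          simp [mem_ends_iff, hphi, Prod.ext_iff, h1, h2]
        simp [this, hax, hax', fun h : a = x => hax h, fun h : a = x - 1 => hax' h]
  · by_cases hax : a = x
    · subst hax
      have : Finset.univ.filter (fun y : ZMod L => (a, y) ∈ kleinEnds L ((a, b), 1)) = {b, b + 1} := by
        ext y
        simp [mem_ends_iff, Prod.ext_iff]
      rw [this]
      have hbb : b ≠ b + 1 := fun h => h10 (by linear_combination -h)
      simp [Finset.card_insert_of_notMem, hbb]
    · have : Finset.univ.filter (fun y : ZMod L => (x, y) ∈ kleinEnds L ((a, b), 1)) = ∅ := by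
        ext y
        have h1 : x ≠ a := fun h => hax h.symm
        simp [mem_ends_iff, Prod.ext_iff, h1]
      simp [this, hax]

abbrev kcol (L : ℕ) (T : Finset ((ZMod L × ZMod L) × Fin 2)) (x : ZMod L) :
    Finset ((ZMod L × ZMod L) × Fin 2) :=
  T.filter (fun e => e.2 = 0 ∧ e.1.1 = x)

lemma col_parity (L : ℕ) (hL : 2 ≤ L) [NeZero L] (T : Finset ((ZMod L × ZMod L) × Fin 2))
    (hcyc : ∀ v, Even ((T.filter (fun e => v ∈ kleinEnds L e)).card)) (x : ZMod L) :
    Even ((kcol L T x).card + (kcol L T (x - 1)).card) := by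
  have hsum : Even (∑ y : ZMod L,
      (T.filter (fun e => ((x, y) : ZMod L × ZMod L) ∈ kleinEnds L e)).card) :=
    Finset.even_sum _ (fun y _ => hcyc (x, y))
  have hswap : ∑ y : ZMod L, (T.filter (fun e => ((x, y) : ZMod L × ZMod L) ∈ kleinEnds L e)).card
      = ∑ e ∈ T, (Finset.univ.filter (fun y : ZMod L => (x, y) ∈ kleinEnds L e)).card := by
    simp_rw [Finset.card_filter]
    exact Finset.sum_comm
  rw [hswap] at hsum
  simp_rw [fiber_card L hL x] at hsum
  rw [Finset.sum_add_distrib, Finset.sum_add_distrib] at hsum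
  rw [← Finset.card_filter, ← Finset.card_filter] at hsum
  have h2 : ∑ e ∈ T, (if e.2 = 1 ∧ e.1.1 = x then 2 else 0)
      = 2 * (T.filter (fun e => e.2 = 1 ∧ e.1.1 = x)).card := by
    rw [Finset.card_filter, Finset.mul_sum]
    congr 1
    ext e
    split <;> simp
  rw [h2] at hsum
  simp only [kcol]
  rw [Nat.even_iff] at hsum ⊢
  omega

lemma col_odd (L : ℕ) (hL : 2 ≤ L) [NeZero L] (T : Finset ((ZMod L × ZMod L) × Fin 2))
    (hcyc : ∀ v, Even ((T.filter (fun e => v ∈ kleinEnds L e)).card))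
    (hodd : Odd ((kcol L T (-1)).card)) (x : ZMod L) : Odd ((kcol L T x).card) := by
  have key : ∀ n : ℕ, Odd ((kcol L T (-1 + n)).card) := by
    intro n
    induction n with
    | zero => simpa using hodd
    | succ n ih =>
      have h := col_parity L hL T hcyc (-1 + (n + 1 : ℕ))
      have he : ((-1 : ZMod L) + (n + 1 : ℕ)) - 1 = -1 + n := by push_cast; ring
      rw [he, Nat.even_add] at h
      rw [← Nat.not_even_iff_odd] at ih ⊢
      exact fun hev => ih (h.mp hev)
  have := key (x + 1).val
  rwa [show (-1 : ZMod L) + ((x + 1).val : ℕ) = x by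
    rw [ZMod.natCast_rightInverse (x + 1)]; ring] at this

lemma klein_lower_bound (L : ℕ) (hL : 2 ≤ L) (hLeven : Even L)
    (S : Set ((ZMod L × ZMod L) × Fin 2)) (hcyc : kleinIsCycle L S)
    (hodd : Odd ((S ∩ kleinSeam L).ncard)) : L + 1 ≤ S.ncard := by
  haveI : NeZero L := ⟨by omega⟩
  haveI : Fact (1 < L) := ⟨hL⟩
  have h10 : (1 : ZMod L) ≠ 0 := one_ne_zero
  have hSfin : S.Finite := Set.toFinite S
  set T : Finset ((ZMod L × ZMod L) × Fin 2) := hSfin.toFinset with hT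
  have hmemT : ∀ e, e ∈ T ↔ e ∈ S := fun e => hSfin.mem_toFinset
  have hcard : S.ncard = T.card := Set.ncard_eq_toFinset_card S hSfin
  have hcyc' : ∀ v, Even ((T.filter (fun e => v ∈ kleinEnds L e)).card) := by
    intro v
    have h := hcyc v
    have heq : {e | e ∈ S ∧ v ∈ kleinEnds L e}
        = ↑(T.filter (fun e => v ∈ kleinEnds L e)) := by
      ext e; simp [hmemT]
    rwa [heq, Set.ncard_coe_finset] at h
  -- seam is column -1
  have hseam : (S ∩ kleinSeam L).ncard = (kcol L T (-1)).card := by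
    have heq : S ∩ kleinSeam L = ↑(kcol L T (-1)) := by
      ext e
      rcases e with ⟨⟨a, b⟩, i⟩
      simp only [kcol, Set.mem_inter_iff, kleinSeam, Set.mem_setOf_eq, Finset.coe_filter,
        hmemT, Prod.ext_iff]
      constructor
      · rintro ⟨hS, y, h1, h2⟩
        exact ⟨hS, h2, h1.1⟩
      · rintro ⟨hS, h2, h1⟩
        exact ⟨hS, b, ⟨h1, rfl⟩, h2⟩
    rw [heq, Set.ncard_coe_finset]
  rw [hseam] at hodd
  have hcolodd : ∀ x, Odd ((kcol L T x).card) := col_odd L hL T hcyc' hodd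
  have hge1 : ∀ x, 1 ≤ (kcol L T x).card := fun x => (hcolodd x).pos
  have hfib : (T.filter (fun e => e.2 = 0)).card = ∑ x : ZMod L, (kcol L T x).card := by
    rw [Finset.card_eq_sum_card_fiberwise
      (f := fun e => e.1.1) (t := Finset.univ) (fun e _ => Finset.mem_univ _)]
    simp [kcol, Finset.filter_filter]
  have hsum_ge : L ≤ ∑ x : ZMod L, (kcol L T x).card := by
    calc L = ∑ _x : ZMod L, 1 := by simp [ZMod.card]
    _ ≤ _ := Finset.sum_le_sum (fun x _ => hge1 x)
  have hHL : L ≤ (T.filter (fun e => e.2 = 0)).card := by rw [hfib]; exact hsum_ge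
  have hTL : L ≤ T.card := le_trans hHL (Finset.card_filter_le _ _)
  by_contra hcon
  push_neg at hcon
  rw [hcard] at hcon
  have hTcard : T.card = L := by omega
  have hfilter_eq : T.filter (fun e => e.2 = 0) = T :=
    Finset.eq_of_subset_of_card_le (Finset.filter_subset _ _) (by omega)
  have hcol1 : ∀ x, (kcol L T x).card = 1 := by
    by_contra hcontra
    push_neg at hcontra
    obtain ⟨x₀, hx₀⟩ := hcontra
    have hlt : 1 < (kcol L T x₀).card := lt_of_le_of_ne (hge1 x₀) (Ne.symm hx₀)
    have : (∑ _x : ZMod L, 1) < ∑ x : ZMod L, (kcol L T x).card :=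
      Finset.sum_lt_sum (fun i _ => hge1 i) ⟨x₀, Finset.mem_univ _, hlt⟩
    simp [ZMod.card] at this
    rw [hfilter_eq] at hfib
    omega
  choose E hEspec using fun x => Finset.card_eq_one.mp (hcol1 x)
  have hEmem : ∀ x, E x ∈ kcol L T x := fun x => by
    rw [hEspec x]; exact Finset.mem_singleton_self _
  have hET : ∀ x, E x ∈ T := fun x => (Finset.mem_filter.mp (hEmem x)).1
  have hE0 : ∀ x, (E x).2 = 0 := fun x => (Finset.mem_filter.mp (hEmem x)).2.1
  have hEx : ∀ x, (E x).1.1 = x := fun x => (Finset.mem_filter.mp (hEmem x)).2.2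
  set Y : ZMod L → ZMod L := fun x => (E x).1.2 with hY
  have hExY : ∀ x, E x = ((x, Y x), 0) := by
    intro x
    have h1 : (E x).1 = (x, Y x) := Prod.ext (hEx x) rfl
    exact Prod.ext h1 (hE0 x)
  have hall : ∀ e ∈ T, e = E e.1.1 := by
    intro e heT
    have he0 : e.2 = 0 := by
      rw [← hfilter_eq] at heT
      exact (Finset.mem_filter.mp heT).2
    have : e ∈ kcol L T e.1.1 := Finset.mem_filter.mpr ⟨heT, he0, rfl⟩
    rw [hEspec] at this
    exact Finset.mem_singleton.mp this
  -- consecutive columns share the row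
  have hcons : ∀ x : ZMod L, x ≠ -1 → Y (x + 1) = Y x := by
    intro x hx
    set v : ZMod L × ZMod L := (x + 1, Y x) with hv
    have hvmem : v ∈ kleinEnds L (E x) := by
      rw [hExY x, mem_ends_iff]
      left
      refine ⟨rfl, Or.inr ?_⟩
      unfold kleinPhi
      simp [hx, hv]
    have hED : E x ∈ T.filter (fun e => v ∈ kleinEnds L e) :=
      Finset.mem_filter.mpr ⟨hET x, hvmem⟩
    have heven := hcyc' v
    have hlt : 1 < (T.filter (fun e => v ∈ kleinEnds L e)).card := by
      have hpos : 0 < (T.filter (fun e => v ∈ kleinEnds L e)).card :=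
        Finset.card_pos.mpr ⟨E x, hED⟩
      rcases heven with ⟨k, hk⟩
      omega
    obtain ⟨e', he'D, he'ne⟩ := Finset.exists_mem_ne hlt (E x)
    have he'T : e' ∈ T := (Finset.mem_filter.mp he'D).1
    have he'end : v ∈ kleinEnds L e' := (Finset.mem_filter.mp he'D).2
    have he'eq : e' = E e'.1.1 := hall e' he'T
    rw [he'eq, hExY e'.1.1, mem_ends_iff] at he'end
    rcases he'end with ⟨-, hcase⟩ | ⟨h01, -⟩
    · rcases hcase with hc1 | hc2
      · -- v = (e'.1.1, Y e'.1.1)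
        have hc1' : ((x : ZMod L) + 1, Y x) = (e'.1.1, Y e'.1.1) := hc1
        rw [Prod.mk.injEq] at hc1'
        obtain ⟨h1, h2⟩ := hc1'
        rw [← h1] at h2
        exact h2.symm
      · -- v = kleinPhi (e'.1.1, Y e'.1.1)
        exfalso
        have hc2' : ((x : ZMod L) + 1, Y x) = kleinPhi L (e'.1.1, Y e'.1.1) := hc2
        have h1 := congrArg Prod.fst hc2'
        simp only [kleinPhi_fst] at h1
        have h2 : e'.1.1 = x := by linear_combination -h1
        rw [he'eq, h2] at he'ne
        exact he'ne rfl
    · simp at h01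
  -- Y is constant
  have hconst : ∀ n : ℕ, n < L → Y (n : ZMod L) = Y 0 := by
    intro n
    induction n with
    | zero => intro _; simp
    | succ n ih =>
      intro hn
      have hne : (n : ZMod L) ≠ -1 := by
        intro h
        have : ((n + 1 : ℕ) : ZMod L) = 0 := by push_cast [h]; ring
        rw [ZMod.natCast_eq_zero_iff] at this
        have := Nat.le_of_dvd (by omega) this
        omega
      have := hcons (n : ZMod L) hne
      push_cast
      rw [this, ih (by omega)]
  have hYall : ∀ x : ZMod L, Y x = Y 0 := by
    intro x
    have := hconst x.val (ZMod.val_lt x)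
    rwa [ZMod.natCast_rightInverse x] at this
  set c : ZMod L := Y 0 with hc
  have hpar : ∀ d : ZMod L, -1 - d = d → False := by
    intro d hd
    have h2L : (2 : ℕ) ∣ L := by obtain ⟨k, hk⟩ := hLeven; exact ⟨k, by omega⟩
    have hmap := congrArg (ZMod.castHom h2L (ZMod 2)) hd
    rw [map_sub, map_neg, map_one] at hmap
    have hdec : ∀ a : ZMod 2, -1 - a = a → False := by decide
    exact hdec _ hmap
  set w : ZMod L × ZMod L := (0, -1 - c) with hw
  have hwD : T.filter (fun e => w ∈ kleinEnds L e) = {E (-1)} := by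
    ext e
    simp only [Finset.mem_filter, Finset.mem_singleton]
    constructor
    · rintro ⟨heT, hend⟩
      rw [hall e heT, hExY e.1.1, mem_ends_iff] at hend
      rcases hend with ⟨-, hcase⟩ | ⟨h01, -⟩
      · rcases hcase with hc1 | hc2
        · exfalso
          have hc1' : ((0 : ZMod L), -1 - c) = (e.1.1, Y e.1.1) := hc1
          rw [Prod.mk.injEq] at hc1'
          have h2 : -1 - c = Y e.1.1 := hc1'.2
          rw [hYall e.1.1] at h2
          exact hpar c h2
        · have hc2' : ((0 : ZMod L), -1 - c) = kleinPhi L (e.1.1, Y e.1.1) := hc2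
          have h1 := congrArg Prod.fst hc2'
          simp only [kleinPhi_fst] at h1
          have h2 : e.1.1 = -1 := by linear_combination -h1
          rw [hall e heT, h2]
      · simp at h01
    · rintro rfl
      refine ⟨hET _, ?_⟩
      rw [hExY (-1), mem_ends_iff]
      left
      refine ⟨rfl, Or.inr ?_⟩
      unfold kleinPhi
      simp [hYall, hw]
  have := hcyc' w
  rw [hwD] at this
  simp at this

/-- The witness cycle: the horizontal loop in row `-1` plus one vertical edge. -/
def kleinGood (L : ℕ) : Set ((ZMod L × ZMod L) × Fin 2) :=
  {e | (e.2 = 0 ∧ e.1.2 = -1) ∨ e = ((0, -1), 1)}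

lemma kleinGood_card (L : ℕ) (hL : 2 ≤ L) : (kleinGood L).ncard = L + 1 := by
  haveI : NeZero L := ⟨by omega⟩
  have heq : kleinGood L
      = (fun x : ZMod L => (((x, (-1 : ZMod L)), (0 : Fin 2)))) '' Set.univ ∪ {((0, -1), 1)} := by
    ext ⟨⟨a, b⟩, i⟩
    simp only [kleinGood, Set.mem_setOf_eq, Set.mem_union, Set.mem_image, Set.mem_singleton_iff,
      Set.mem_univ, true_and, Prod.mk.injEq]
    constructor
    · rintro (⟨h0, hb⟩ | h)
      · exact Or.inl ⟨a, ⟨rfl, hb.symm⟩, h0.symm⟩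
      · exact Or.inr h
    · rintro (⟨x, ⟨hx, hb⟩, h0⟩ | h)
      · exact Or.inl ⟨h0.symm, hb.symm⟩
      · exact Or.inr h
  have hinj : Function.Injective (fun x : ZMod L => (((x, (-1 : ZMod L)), (0 : Fin 2)))) := by
    intro a b h
    exact (Prod.mk.inj (Prod.mk.inj h).1).1
  have h1 : ((fun x : ZMod L => (((x, (-1 : ZMod L)), (0 : Fin 2)))) '' Set.univ).ncard = L := by
    rw [Set.ncard_image_of_injective _ hinj, Set.ncard_univ, Nat.card_zmod]
  have hdisj : Disjoint ((fun x : ZMod L => (((x, (-1 : ZMod L)), (0 : Fin 2)))) '' Set.univ)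
      ({(((0 : ZMod L), (-1 : ZMod L)), (1 : Fin 2))} : Set _) := by
    rw [Set.disjoint_singleton_right]
    rintro ⟨x, -, hx⟩
    have := congrArg Prod.snd hx
    simp at this
  rw [heq, Set.ncard_union_eq hdisj (Set.toFinite _) (Set.toFinite _), h1, Set.ncard_singleton]

lemma mem_good_h (L : ℕ) (v : ZMod L × ZMod L) (x : ZMod L) :
    v ∈ kleinEnds L ((x, (-1 : ZMod L)), (0 : Fin 2)) ↔
      v = (x, -1) ∨ (x = -1 ∧ v = (0, 0)) ∨ (x ≠ -1 ∧ v = (x + 1, -1)) := by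
  rw [mem_ends_iff]
  by_cases hx : x = -1
  · subst hx
    have hphi : kleinPhi L ((-1 : ZMod L), (-1 : ZMod L)) = (0, 0) := by
      unfold kleinPhi
      norm_num
    simp [hphi]
  · have hphi : kleinPhi L (x, (-1 : ZMod L)) = (x + 1, -1) := by
      unfold kleinPhi
      simp [hx]
    simp [hphi, hx]

lemma mem_good_u (L : ℕ) (v : ZMod L × ZMod L) :
    v ∈ kleinEnds L (((0 : ZMod L), (-1 : ZMod L)), (1 : Fin 2)) ↔
      v = (0, -1) ∨ v = (0, 0) := by
  rw [mem_ends_iff]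
  have : ((0 : ZMod L), (-1 : ZMod L)) + (0, 1) = (0, 0) := by
    rw [Prod.mk_add_mk]
    norm_num
  simp [this]

lemma kleinGood_seam (L : ℕ) (hL : 2 ≤ L) :
    kleinGood L ∩ kleinSeam L = {(((-1 : ZMod L), (-1 : ZMod L)), (0 : Fin 2))} := by
  ext ⟨⟨a, b⟩, i⟩
  simp only [kleinGood, kleinSeam, Set.mem_inter_iff, Set.mem_setOf_eq,
    Set.mem_singleton_iff, Prod.mk.injEq]
  constructor
  · rintro ⟨hg, y, ⟨ha, hb⟩, hi⟩
    rcases hg with ⟨-, hb3⟩ | ⟨-, hi1⟩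
    · exact ⟨⟨ha, hb3⟩, hi⟩
    · exfalso
      rw [hi] at hi1
      simp at hi1
  · rintro ⟨⟨ha, hb⟩, hi⟩
    exact ⟨Or.inl ⟨hi, hb⟩, b, ⟨ha, rfl⟩, hi⟩

lemma kleinGood_cycle (L : ℕ) (hL : 2 ≤ L) : kleinIsCycle L (kleinGood L) := by
  haveI : NeZero L := ⟨by omega⟩
  haveI : Fact (1 < L) := ⟨hL⟩
  have h10 : (1 : ZMod L) ≠ 0 := one_ne_zero
  have hm10 : (-1 : ZMod L) ≠ 0 := by simpa using h10
  rintro ⟨a, b⟩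
  by_cases hb : b = -1
  · subst hb
    by_cases ha : a = 0
    · subst ha
      have hD : {e | e ∈ kleinGood L ∧ ((0 : ZMod L), (-1 : ZMod L)) ∈ kleinEnds L e}
          = {(((0 : ZMod L), (-1 : ZMod L)), (0 : Fin 2)), (((0 : ZMod L), (-1 : ZMod L)), (1 : Fin 2))} := by
        ext ⟨⟨x, yy⟩, i⟩
        simp only [Set.mem_setOf_eq, kleinGood, Set.mem_insert_iff, Set.mem_singleton_iff,
          Prod.mk.injEq]
        constructor
        · rintro ⟨⟨hi, hyy⟩ | hU, hend⟩
          · subst hi; subst hyy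
            rw [mem_good_h] at hend
            rcases hend with h1 | ⟨hx, h2⟩ | ⟨hx, h3⟩
            · exact Or.inl ⟨⟨(Prod.mk.inj h1).1.symm, rfl⟩, rfl⟩
            · exact absurd (Prod.mk.inj h2).2 hm10
            · exfalso
              have hx0 : x = -1 := by
                have := (Prod.mk.inj h3).1
                linear_combination -this
              exact hx hx0
          · exact Or.inr hU
        · rintro (⟨⟨hx, hyy⟩, hi⟩ | ⟨⟨hx, hyy⟩, hi⟩) <;> subst hx <;> subst hyy <;> subst hi
          · exact ⟨Or.inl ⟨rfl, rfl⟩, by rw [mem_good_h]; exact Or.inl rfl⟩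
          · exact ⟨Or.inr ⟨⟨rfl, rfl⟩, rfl⟩, by rw [mem_good_u]; exact Or.inl rfl⟩
      rw [hD, Set.ncard_pair (by simp)]
      exact ⟨1, rfl⟩
    · have hD : {e | e ∈ kleinGood L ∧ ((a : ZMod L), (-1 : ZMod L)) ∈ kleinEnds L e}
          = {((a, (-1 : ZMod L)), (0 : Fin 2)), ((a - 1, (-1 : ZMod L)), (0 : Fin 2))} := by
        ext ⟨⟨x, yy⟩, i⟩
        simp only [Set.mem_setOf_eq, kleinGood, Set.mem_insert_iff, Set.mem_singleton_iff,
          Prod.mk.injEq]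
        constructor
        · rintro ⟨⟨hi, hyy⟩ | hU, hend⟩
          · subst hi; subst hyy
            rw [mem_good_h] at hend
            rcases hend with h1 | ⟨hx, h2⟩ | ⟨hx, h3⟩
            · exact Or.inl ⟨⟨(Prod.mk.inj h1).1.symm, rfl⟩, rfl⟩
            · exact absurd (Prod.mk.inj h2).2 hm10
            · refine Or.inr ⟨⟨?_, rfl⟩, rfl⟩
              have := (Prod.mk.inj h3).1
              linear_combination -this
          · exfalso
            obtain ⟨⟨hx, hyy⟩, hi⟩ := hU
            subst hx; subst hyy; subst hi
            rw [mem_good_u] at hend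
            rcases hend with h1 | h2
            · exact ha (Prod.mk.inj h1).1
            · exact hm10 (Prod.mk.inj h2).2
        · rintro (⟨⟨hx, hyy⟩, hi⟩ | ⟨⟨hx, hyy⟩, hi⟩) <;> subst hx <;> subst hyy <;> subst hi
          · exact ⟨Or.inl ⟨rfl, rfl⟩, by rw [mem_good_h]; exact Or.inl rfl⟩
          · refine ⟨Or.inl ⟨rfl, rfl⟩, by
              rw [mem_good_h]
              refine Or.inr (Or.inr ⟨?_, ?_⟩)
              · intro h
                exact ha (by linear_combination h)
              · rw [Prod.mk.injEq]
                exact ⟨by ring, rfl⟩⟩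
      rw [hD, Set.ncard_pair (by
        intro h
        have := (Prod.mk.inj (Prod.mk.inj h).1).1
        exact h10 (by linear_combination this))]
      exact ⟨1, rfl⟩
  · by_cases h00 : a = 0 ∧ b = 0
    · obtain ⟨rfl, rfl⟩ := h00
      have hD : {e | e ∈ kleinGood L ∧ ((0 : ZMod L), (0 : ZMod L)) ∈ kleinEnds L e}
          = {(((-1 : ZMod L), (-1 : ZMod L)), (0 : Fin 2)), (((0 : ZMod L), (-1 : ZMod L)), (1 : Fin 2))} := by
        ext ⟨⟨x, yy⟩, i⟩
        simp only [Set.mem_setOf_eq, kleinGood, Set.mem_insert_iff, Set.mem_singleton_iff,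
          Prod.mk.injEq]
        constructor
        · rintro ⟨⟨hi, hyy⟩ | hU, hend⟩
          · subst hi; subst hyy
            rw [mem_good_h] at hend
            rcases hend with h1 | ⟨hx, h2⟩ | ⟨hx, h3⟩
            · exact absurd (Prod.mk.inj h1).2.symm hm10
            · exact Or.inl ⟨⟨hx, rfl⟩, rfl⟩
            · exact absurd (Prod.mk.inj h3).2.symm hm10
          · exact Or.inr hU
        · rintro (⟨⟨hx, hyy⟩, hi⟩ | ⟨⟨hx, hyy⟩, hi⟩) <;> subst hx <;> subst hyy <;> subst hi
          · exact ⟨Or.inl ⟨rfl, rfl⟩, by rw [mem_good_h]; exact Or.inr (Or.inl ⟨rfl, rfl⟩)⟩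
          · exact ⟨Or.inr ⟨⟨rfl, rfl⟩, rfl⟩, by rw [mem_good_u]; exact Or.inr rfl⟩
      rw [hD, Set.ncard_pair (by simp)]
      exact ⟨1, rfl⟩
    · have hD : {e | e ∈ kleinGood L ∧ ((a : ZMod L), b) ∈ kleinEnds L e} = ∅ := by
        ext ⟨⟨x, yy⟩, i⟩
        simp only [Set.mem_setOf_eq, kleinGood, Set.mem_empty_iff_false, iff_false, not_and,
          Prod.mk.injEq]
        rintro (⟨hi, hyy⟩ | hU)
        · subst hi; subst hyy
          rw [mem_good_h]
          rintro (h1 | ⟨hx, h2⟩ | ⟨hx, h3⟩)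
          · exact hb (Prod.mk.inj h1).2
          · obtain ⟨ha0, hb0⟩ := Prod.mk.inj h2
            exact h00 ⟨ha0, hb0⟩
          · exact hb (Prod.mk.inj h3).2
        · obtain ⟨⟨hx, hyy⟩, hi⟩ := hU
          subst hx; subst hyy; subst hi
          rw [mem_good_u]
          rintro (h1 | h2)
          · exact hb (Prod.mk.inj h1).2
          · obtain ⟨ha0, hb0⟩ := Prod.mk.inj h2
            exact h00 ⟨ha0, hb0⟩
      rw [hD, Set.ncard_empty]
      exact ⟨0, rfl⟩

/-- For even `L ≥ 2`, the minimum cardinality of a 1-cycle of the `L × L` Klein-bottle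
lattice crossing the seam an odd number of times is exactly `L + 1` (one more than the
length-`L` shortest such cycle on the `L × L` toric lattice), and this bound is
attained. -/
theorem klein_even_distance (L : ℕ) (hL : 2 ≤ L) (hLeven : Even L) :
    IsLeast {k : ℕ | ∃ S : Set ((ZMod L × ZMod L) × Fin 2),
        kleinIsCycle L S ∧ Odd ((S ∩ kleinSeam L).ncard) ∧ S.ncard = k} (L + 1) := by
  constructor
  · refine ⟨kleinGood L, kleinGood_cycle L hL, ?_, kleinGood_card L hL⟩
    rw [kleinGood_seam L hL, Set.ncard_singleton]
    exact ⟨0, rfl⟩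
  · rintro k ⟨S, h1, h2, rfl⟩
    exact klein_lower_bound L hL hLeven S h1 h2
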